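/- Let T be a triangulated category with a mod-n reduction, i.e. an exact functor ρ_* : T → T/n to a triangulated category T/n with exact right adjoint ρ^*, such that for every X there is a distinguished triangle X --(n·id)--> X --η_X--> ρ^*(ρ_* X) → X[1] in which η_X is the adjunction unit. Then for every object Z of T/n and every k, the object ρ^*(Z) has n-order ≥ k in T; consequently every cone X/n of n·id_X has infinite n-order. -/

import Mathlib

open CategoryTheory CategoryTheory.Limits CategoryTheory.Pretriangulated

universe v₁ v₂ u₁ u₂

/-- The inductive "n-order ≥ k" predicate on objects of a triangulated category. -/
def nOrderGE (C : Type u₁) [Category.{v₁} C] [HasZeroObject C] [Preadditive C] [HasShift C ℤ]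
    [∀ i : ℤ, (shiftFunctor C i).Additive] [Pretriangulated C]
    (n : ℕ) : ℕ → C → Prop
  | 0, _ => True
  | k + 1, X => ∀ ⦃K Kn : C⦄ (π : K ⟶ Kn) (δ : Kn ⟶ K⟦(1 : ℤ)⟧),
      (Triangle.mk (n • 𝟙 K) π δ ∈ distTriang C) →
      ∀ f : K ⟶ X, ∃ fb : Kn ⟶ X, π ≫ fb = f ∧
        ∃ (Cf : C) (g : X ⟶ Cf) (h : Cf ⟶ Kn⟦(1 : ℤ)⟧),
          (Triangle.mk fb g h ∈ distTriang C) ∧ nOrderGE C n k Cf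

/-- `nOrderGE` is invariant under isomorphism. -/
lemma nOrderGE_of_iso {C : Type u₁} [Category.{v₁} C] [HasZeroObject C] [Preadditive C]
    [HasShift C ℤ] [∀ i : ℤ, (shiftFunctor C i).Additive] [Pretriangulated C]
    (n : ℕ) (k : ℕ) {A B : C} (e : A ≅ B) (hA : nOrderGE C n k A) : nOrderGE C n k B := by
  induction k with
  | zero => trivial
  | succ k _ =>
    intro K Kn π δ hT f
    obtain ⟨fb, hfb, Cf, g, h, hdist, hord⟩ := hA π δ hT (f ≫ e.inv)
    refine ⟨fb ≫ e.hom, by rw [reassoc_of% hfb]; simp, Cf, e.inv ≫ g, h, ?_, hord⟩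
    refine isomorphic_distinguished _ hdist _ ?_
    exact Triangle.isoMk _ _ (Iso.refl _) e.symm (Iso.refl _)
      (show (fb ≫ e.hom) ≫ e.inv = 𝟙 Kn ≫ fb by simp)
      (Category.comp_id _)
      (show h ≫ (shiftFunctor C (1 : ℤ)).map (𝟙 Kn) = 𝟙 Cf ≫ h by simp)

/-- Suppose the triangulated category `C` has a mod-`n` reduction:
an exact functor `ρs : C ⥤ D` to a triangulated category `D`, with exact right adjoint
`ρu`, such that for every `X` there is a distinguished triangle
`X --(n·id)--> X --η_X--> ρu(ρs X) --> X⟦1⟧` whose second map is the adjunction unit.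
Then every object `ρu Z` has `n`-order `≥ k` in `C` for all `k`; consequently every
cone `X/n` of `n • 𝟙 X` has infinite `n`-order. -/
theorem nOrderGE_of_mod_n_reduction
    {C : Type u₁} [Category.{v₁} C] [HasZeroObject C] [Preadditive C] [HasShift C ℤ]
    [∀ i : ℤ, (shiftFunctor C i).Additive] [Pretriangulated C]
    {D : Type u₂} [Category.{v₂} D] [HasZeroObject D] [Preadditive D] [HasShift D ℤ]
    [∀ i : ℤ, (shiftFunctor D i).Additive] [Pretriangulated D]
    (n : ℕ) (ρs : C ⥤ D) (ρu : D ⥤ C)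
    [ρs.CommShift ℤ] [ρs.IsTriangulated] [ρu.CommShift ℤ] [ρu.IsTriangulated]
    (adj : ρs ⊣ ρu)
    (hred : ∀ X : C, ∃ δ : ρu.obj (ρs.obj X) ⟶ X⟦(1 : ℤ)⟧,
      Triangle.mk (n • 𝟙 X) (adj.unit.app X) δ ∈ distTriang C) :
    (∀ (Z : D) (k : ℕ), nOrderGE C n k (ρu.obj Z)) ∧
    (∀ (X Xn : C) (π : X ⟶ Xn) (δ : Xn ⟶ X⟦(1 : ℤ)⟧),
      (Triangle.mk (n • 𝟙 X) π δ ∈ distTriang C) → ∀ k : ℕ, nOrderGE C n k Xn) := by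
  -- comparison isomorphism between any cone of `n • 𝟙 K` and `ρu (ρs K)`
  have hcomp : ∀ (K Kn : C) (π : K ⟶ Kn) (δ : Kn ⟶ K⟦(1 : ℤ)⟧),
      (Triangle.mk (n • 𝟙 K) π δ ∈ distTriang C) →
      ∃ φ : Kn ⟶ ρu.obj (ρs.obj K), IsIso φ ∧ π ≫ φ = adj.unit.app K := by
    intro K Kn π δ hT
    obtain ⟨δ', hT'⟩ := hred K
    obtain ⟨φ, hφ₁, hφ₂⟩ := complete_distinguished_triangle_morphism _ _ hT hT'
      (𝟙 K) (𝟙 K) ((Category.comp_id _).trans (Category.id_comp _).symm)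
    have : IsIso φ := isIso₃_of_isIso₁₂
      { hom₁ := 𝟙 K, hom₂ := 𝟙 K, hom₃ := φ,
        comm₁ := (Category.comp_id _).trans (Category.id_comp _).symm, comm₂ := hφ₁, comm₃ := hφ₂ } hT hT'
      (IsIso.id K) (IsIso.id K)
    exact ⟨φ, this, hφ₁.trans (Category.id_comp _)⟩
  have main : ∀ (Z : D) (k : ℕ), nOrderGE C n k (ρu.obj Z) := by
    intro Z k
    induction k generalizing Z with
    | zero => trivial
    | succ k ih =>
      intro K Kn π δ hT f
      obtain ⟨φ, hφiso, hφ⟩ := hcomp K Kn π δ hT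
      set f' : ρs.obj K ⟶ Z := (adj.homEquiv K Z).symm f with hf'
      have hf : adj.unit.app K ≫ ρu.map f' = f := by
        have := (adj.homEquiv K Z).apply_symm_apply f
        rwa [Adjunction.homEquiv_unit] at this
      obtain ⟨W, g, h, hW⟩ := distinguished_cocone_triangle f'
      have hmap := ρu.map_distinguished _ hW
      refine ⟨φ ≫ ρu.map f', by rw [reassoc_of% hφ, hf], ρu.obj W, ρu.map g,
        (ρu.map h ≫ (ρu.commShiftIso (1 : ℤ)).hom.app (ρs.obj K)) ≫
          (shiftFunctor C (1 : ℤ)).map (inv φ), ?_, ih W⟩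
      refine isomorphic_distinguished _ hmap _ ?_
      refine Triangle.isoMk _ _ (@asIso _ _ _ _ φ hφiso) (Iso.refl _) (Iso.refl _)
        (show (φ ≫ ρu.map f') ≫ 𝟙 (ρu.obj Z) = φ ≫ ρu.map f' by simp)
        (show ρu.map g ≫ 𝟙 (ρu.obj W) = 𝟙 (ρu.obj Z) ≫ ρu.map g by simp) ?_
      show ((ρu.map h ≫ (ρu.commShiftIso (1 : ℤ)).hom.app (ρs.obj K)) ≫ (shiftFunctor C (1 : ℤ)).map (inv φ)) ≫
        (shiftFunctor C (1 : ℤ)).map φ = 𝟙 (ρu.obj W) ≫ (ρu.map h ≫ (ρu.commShiftIso (1 : ℤ)).hom.app (ρs.obj K))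
      dsimp
      simp [← Functor.map_comp]
  refine ⟨main, ?_⟩
  intro X Xn π δ hT k
  obtain ⟨φ, hφiso, hφ⟩ := hcomp X Xn π δ hT
  exact nOrderGE_of_iso n k (asIso φ).symm (main (ρs.obj X) k)
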